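/- With f₁, f₂ as above (μ₂ ≠ 0, (ω+μ₁)²+μ₂² ≠ 0), the functions E(x,t) = 2μ₂ e^{f₁(x,t)} sech(f₂(x,t)), p(x,t) = (-2iμ₂ e^{f₁}/((ω+μ₁)²+μ₂²))((ω+μ₁)sech(f₂) + iμ₂ sech(f₂)tanh(f₂))·x, and η(x,t) = (1 - 2μ₂² sech²(f₂)/((ω+μ₁)²+μ₂²))·x satisfy the third Maxwell–Bloch equation η_t(x,t) = p(x,t)E*(-x,t) - p*(-x,t)E(x,t). -/

import Mathlib

open Complex

noncomputable def csech (z : ℂ) : ℂ := 1 / Complex.cosh z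

theorem focusing_one_soliton_eta_equation
    (μ1 μ2 ε1 ε2 ω : ℝ) (hμ2 : μ2 ≠ 0)
    (hK : (ω + μ1) ^ 2 + μ2 ^ 2 ≠ 0)
    (f1 : ℝ → ℝ → ℂ) (f2 : ℝ → ℝ → ℝ) (E p : ℝ → ℝ → ℂ) (η : ℝ → ℝ → ℝ)
    (hf1 : ∀ x t : ℝ, f1 x t = -2 * Complex.I * (μ1 : ℂ) * t
        + Complex.I * ((ω : ℂ) + μ1) * x ^ 2 / (((ω : ℂ) + μ1) ^ 2 + (μ2 : ℂ) ^ 2)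
        - 2 * x * (4 * (ε2 : ℂ) * ((μ1 : ℂ) ^ 3 - 3 * μ1 * (μ2 : ℂ) ^ 2)
            - (ε1 : ℂ) * ((μ1 : ℂ) ^ 2 - (μ2 : ℂ) ^ 2)))
    (hf2 : ∀ x t : ℝ, f2 x t = 2 * μ2 * t + μ2 * x ^ 2 / ((ω + μ1) ^ 2 + μ2 ^ 2))
    (hE : ∀ x t : ℝ, E x t = 2 * (μ2 : ℂ) * Complex.exp (f1 x t) * csech ((f2 x t : ℝ) : ℂ))
    (hp : ∀ x t : ℝ, p x t =
        (-2 * Complex.I * (μ2 : ℂ) * Complex.exp (f1 x t)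
            / (((ω : ℂ) + μ1) ^ 2 + (μ2 : ℂ) ^ 2))
          * (((ω : ℂ) + μ1) * csech ((f2 x t : ℝ) : ℂ)
              + Complex.I * (μ2 : ℂ) * csech ((f2 x t : ℝ) : ℂ)
              * Complex.tanh ((f2 x t : ℝ) : ℂ)) * x)
    (hη : ∀ x t : ℝ, η x t =
        (1 - 2 * μ2 ^ 2 * (1 / Real.cosh (f2 x t)) ^ 2 / ((ω + μ1) ^ 2 + μ2 ^ 2)) * x) :
    ∀ x t : ℝ,
      ((deriv (fun s => η x s) t : ℝ) : ℂ)
        = p x t * (starRingEnd ℂ) (E (-x) t) - (starRingEnd ℂ) (p (-x) t) * E x t := by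
  intro x t
  set K : ℝ := (ω + μ1) ^ 2 + μ2 ^ 2 with hKdef
  set c : ℝ := μ2 * x ^ 2 / K with hcdef
  set u : ℝ := f2 x t with hudef
  have hu : u = 2 * μ2 * t + c := by rw [hudef, hf2]
  have hf2even : f2 (-x) t = u := by rw [hudef, hf2, hf2]; ring_nf
  have hcosh : Real.cosh u ≠ 0 := (Real.cosh_pos u).ne'
  -- derivative of η in t
  have hηfun : (fun s => η x s) = fun s =>
      (1 - 2 * μ2 ^ 2 * ((Real.cosh (2 * μ2 * s + c))⁻¹) ^ 2 / K) * x := by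
    funext s
    rw [hη, hf2, one_div]
  have h1 : HasDerivAt (fun s : ℝ => 2 * μ2 * s + c) (2 * μ2) t := by
    simpa using ((hasDerivAt_id t).const_mul (2 * μ2)).add_const c
  have h2 : HasDerivAt (fun s : ℝ => Real.cosh (2 * μ2 * s + c))
      (Real.sinh (2 * μ2 * t + c) * (2 * μ2)) t :=
    (Real.hasDerivAt_cosh _).comp t h1
  have h2' : Real.cosh (2 * μ2 * t + c) ≠ 0 := (Real.cosh_pos _).ne'
  have h3 := h2.inv h2'
  have h4 := h3.pow 2
  have h5 := ((h4.const_mul (2 * μ2 ^ 2)).div_const K).const_sub 1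
  have h6 : HasDerivAt (fun s => (1 - 2 * μ2 ^ 2 * ((Real.cosh (2 * μ2 * s + c))⁻¹) ^ 2 / K) * x)
      (-(2 * μ2 ^ 2 * (((2:ℕ):ℝ) * ((Real.cosh (2 * μ2 * t + c))⁻¹) ^ (2 - 1) *
        (-(Real.sinh (2 * μ2 * t + c) * (2 * μ2)) / Real.cosh (2 * μ2 * t + c) ^ 2)) / K) * x) t :=
    h5.mul_const x
  rw [hηfun, h6.deriv, ← hu]
  -- RHS
  rw [hp, hp, hE, hE, hf2even, ← hudef]
  -- key exponential identity
  have hexp : Complex.exp (f1 x t) * (starRingEnd ℂ) (Complex.exp (f1 (-x) t)) = 1 := by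
    rw [← Complex.exp_conj, ← Complex.exp_add, ← Complex.exp_zero]
    congr 1
    rw [hf1, hf1]
    simp only [map_add, map_sub, map_mul, map_div₀, map_pow, map_neg, map_ofNat,
      Complex.conj_I, Complex.conj_ofReal, map_one]
    push_cast
    ring
  have hexp' : (starRingEnd ℂ) (Complex.exp (f1 (-x) t)) * Complex.exp (f1 x t) = 1 := by
    rw [mul_comm]; exact hexp
  -- convert transcendental pieces to real casts
  have hc1 : Complex.cosh ((u : ℝ) : ℂ) = ((Real.cosh u : ℝ) : ℂ) := (Complex.ofReal_cosh u).symm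
  have ht1 : Complex.tanh ((u : ℝ) : ℂ) = ((Real.tanh u : ℝ) : ℂ) := (Complex.ofReal_tanh u).symm
  simp only [csech, hc1, ht1, map_add, map_sub, map_mul, map_div₀, map_pow, map_neg,
    map_ofNat, map_one, Complex.conj_I, Complex.conj_ofReal]
  have htanh : Real.tanh u = Real.sinh u / Real.cosh u := Real.tanh_eq_sinh_div_cosh u
  have hKc : ((ω : ℂ) + μ1) ^ 2 + (μ2 : ℂ) ^ 2 = ((K : ℝ) : ℂ) := by
    rw [hKdef]; push_cast; ring
  have hKne : (K : ℂ) ≠ 0 := by exact_mod_cast hK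
  have hcoshc : ((Real.cosh u : ℝ) : ℂ) ≠ 0 := by exact_mod_cast hcosh
  rw [htanh, hKc]
  push_cast
  field_simp
  ring_nf
  simp only [Complex.I_sq]
  ring_nf
  linear_combination (-(2:ℂ) * ((μ2:ℂ) ^ 3 * Complex.sinh (u:ℂ) * (x:ℂ) *
    (Complex.cosh (u:ℂ))⁻¹ ^ 3)) * hexp
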